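/- Let ρ, u : [σ_ℓ, σ_p] → ℝ be differentiable and satisfy the ODE system ρ'(x) = −2u(x)(u(x)−x) ρ(x) / ( x ((u(x)−x)² − c(x)²) ) and u'(x) = 2 c(x)² u(x) / ( x ((u(x)−x)² − c(x)²) ), with c(x)² = γ s₁ ρ(x)^{γ−1}, γ > 1, s₁ > 0. Assume 0 ≤ u(x) ≤ x and ρ(x) ≥ 0 on [σ_ℓ, σ_p] with σ_ℓ > 0, and boundary values u(σ_p) = u₁ > 0, ρ(σ_p) = ρ₁ > 0 with u₁ + c(σ_p) − σ_p > 0. Then ρ and u are decreasing on [σ_ℓ, σ_p], and ρ(x) ≥ ρ₁ > 0, u(x) ≥ u₁ > 0 for all x in [σ_ℓ, σ_p]. -/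

import Mathlib

open Set in
theorem stmt_12 (γ s₁ σ_ℓ σ_p ρ₁ u₁ : ℝ) (ρ u c : ℝ → ℝ)
    (hγ : 1 < γ) (hs₁ : 0 < s₁) (hσℓ : 0 < σ_ℓ) (hσ : σ_ℓ < σ_p)
    (hc : ∀ x ∈ Icc σ_ℓ σ_p, 0 ≤ c x ∧ c x ^ 2 = γ * s₁ * ρ x ^ (γ - 1))
    (hρ' : ∀ x ∈ Icc σ_ℓ σ_p, HasDerivAt ρ
      (-(2 * u x * (u x - x) * ρ x) / (x * ((u x - x) ^ 2 - c x ^ 2))) x)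
    (hu' : ∀ x ∈ Icc σ_ℓ σ_p, HasDerivAt u
      (2 * c x ^ 2 * u x / (x * ((u x - x) ^ 2 - c x ^ 2))) x)
    (hbounds : ∀ x ∈ Icc σ_ℓ σ_p, 0 ≤ u x ∧ u x ≤ x ∧ 0 ≤ ρ x)
    (hup : u σ_p = u₁) (hρp : ρ σ_p = ρ₁) (hu₁ : 0 < u₁) (hρ₁ : 0 < ρ₁)
    (hLax : 0 < u₁ + c σ_p - σ_p) :
    StrictAntiOn ρ (Icc σ_ℓ σ_p) ∧ StrictAntiOn u (Icc σ_ℓ σ_p) ∧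
    ∀ x ∈ Icc σ_ℓ σ_p, ρ₁ ≤ ρ x ∧ u₁ ≤ u x := by
  have hmemp : σ_p ∈ Icc σ_ℓ σ_p := ⟨hσ.le, le_rfl⟩
  have hρcont : ContinuousOn ρ (Icc σ_ℓ σ_p) :=
    fun x hx => ((hρ' x hx).continuousAt).continuousWithinAt
  have hucont : ContinuousOn u (Icc σ_ℓ σ_p) :=
    fun x hx => ((hu' x hx).continuousAt).continuousWithinAt
  have hccont : ContinuousOn c (Icc σ_ℓ σ_p) := by
    have h1 : ContinuousOn (fun x => Real.sqrt (γ * s₁ * ρ x ^ (γ - 1))) (Icc σ_ℓ σ_p) :=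
      Real.continuous_sqrt.comp_continuousOn
        (continuousOn_const.mul (hρcont.rpow_const fun x hx => Or.inr (by linarith)))
    refine h1.congr fun x hx => ?_
    dsimp only
    rw [← (hc x hx).2, Real.sqrt_sq (hc x hx).1]
  have hFcont : ContinuousOn (fun x => c x + u x - x) (Icc σ_ℓ σ_p) :=
    (hccont.add hucont).sub continuousOn_id
  have hFp : 0 < c σ_p + u σ_p - σ_p := by rw [hup]; linarith
  -- denominator negative on the subsonic region
  have hDneg : ∀ y ∈ Icc σ_ℓ σ_p, 0 < c y + u y - y →
      y * ((u y - y) ^ 2 - c y ^ 2) < 0 := by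
    intro y hy hF
    obtain ⟨hu0, huy, hρ0⟩ := hbounds y hy
    have hcy : y - u y < c y := by linarith
    have h2 : (u y - y) ^ 2 < c y ^ 2 := by nlinarith
    exact mul_neg_of_pos_of_neg (by linarith [hy.1]) (by linarith)
  have hu'le : ∀ y ∈ Icc σ_ℓ σ_p, 0 < c y + u y - y →
      2 * c y ^ 2 * u y / (y * ((u y - y) ^ 2 - c y ^ 2)) ≤ 0 := by
    intro y hy hF
    have hnum : 0 ≤ 2 * c y ^ 2 * u y := by
      have := (hbounds y hy).1; positivity
    exact div_nonpos_of_nonneg_of_nonpos hnum (hDneg y hy hF).le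
  have hρ'le : ∀ y ∈ Icc σ_ℓ σ_p, 0 < c y + u y - y →
      -(2 * u y * (u y - y) * ρ y) / (y * ((u y - y) ^ 2 - c y ^ 2)) ≤ 0 := by
    intro y hy hF
    obtain ⟨hu0, huy, hρ0⟩ := hbounds y hy
    have hnum : 0 ≤ -(2 * u y * (u y - y) * ρ y) := by
      nlinarith [mul_nonneg (mul_nonneg hu0 (sub_nonneg.2 huy)) hρ0]
    exact div_nonpos_of_nonneg_of_nonpos hnum (hDneg y hy hF).le
  -- if subsonic on (m, σ_p], then ρ ≥ ρ₁ and u ≥ u₁ on [m, σ_p]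
  have key : ∀ m ∈ Icc σ_ℓ σ_p, (∀ y ∈ Ioc m σ_p, 0 < c y + u y - y) →
      ∀ y ∈ Icc m σ_p, ρ₁ ≤ ρ y ∧ u₁ ≤ u y := by
    intro m hm hA
    have hsub : Icc m σ_p ⊆ Icc σ_ℓ σ_p := Icc_subset_Icc_left hm.1
    have hantiu : AntitoneOn u (Icc m σ_p) := by
      apply antitoneOn_of_deriv_nonpos (convex_Icc m σ_p) (hucont.mono hsub)
      · intro y hy
        rw [interior_Icc] at hy
        exact ((hu' y (hsub ⟨hy.1.le, hy.2.le⟩)).differentiableAt).differentiableWithinAt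
      · intro y hy
        rw [interior_Icc] at hy
        have hyI : y ∈ Icc σ_ℓ σ_p := hsub ⟨hy.1.le, hy.2.le⟩
        rw [(hu' y hyI).deriv]
        exact hu'le y hyI (hA y ⟨hy.1, hy.2.le⟩)
    have hantiρ : AntitoneOn ρ (Icc m σ_p) := by
      apply antitoneOn_of_deriv_nonpos (convex_Icc m σ_p) (hρcont.mono hsub)
      · intro y hy
        rw [interior_Icc] at hy
        exact ((hρ' y (hsub ⟨hy.1.le, hy.2.le⟩)).differentiableAt).differentiableWithinAt
      · intro y hy
        rw [interior_Icc] at hy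
        have hyI : y ∈ Icc σ_ℓ σ_p := hsub ⟨hy.1.le, hy.2.le⟩
        rw [(hρ' y hyI).deriv]
        exact hρ'le y hyI (hA y ⟨hy.1, hy.2.le⟩)
    intro y hy
    constructor
    · have := hantiρ hy ⟨hy.1.trans hy.2, le_rfl⟩ hy.2
      rwa [hρp] at this
    · have := hantiu hy ⟨hy.1.trans hy.2, le_rfl⟩ hy.2
      rwa [hup] at this
  -- x ↦ x - u x is strictly increasing where subsonic
  have hgmono : ∀ m ∈ Icc σ_ℓ σ_p, (∀ y ∈ Ioc m σ_p, 0 < c y + u y - y) →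
      StrictMonoOn (fun x => x - u x) (Icc m σ_p) := by
    intro m hm hA
    have hsub : Icc m σ_p ⊆ Icc σ_ℓ σ_p := Icc_subset_Icc_left hm.1
    have hgc : ContinuousOn (fun x : ℝ => x - u x) (Icc m σ_p) := fun x hx =>
      (((hasDerivAt_id x).sub (hu' x (hsub hx))).continuousAt).continuousWithinAt
    apply strictMonoOn_of_deriv_pos (convex_Icc m σ_p) hgc
    intro y hy
    rw [interior_Icc] at hy
    have hyI : y ∈ Icc σ_ℓ σ_p := hsub ⟨hy.1.le, hy.2.le⟩
    have hd : HasDerivAt (fun x => x - u x)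
        (1 - 2 * c y ^ 2 * u y / (y * ((u y - y) ^ 2 - c y ^ 2))) y :=
      (hasDerivAt_id y).sub (hu' y hyI)
    rw [hd.deriv]
    have := hu'le y hyI (hA y ⟨hy.1, hy.2.le⟩)
    linarith
  -- the first-crossing argument
  set S : Set ℝ := {x | x ∈ Icc σ_ℓ σ_p ∧ ∀ y ∈ Icc x σ_p, 0 < c y + u y - y} with hSdef
  have hpS : σ_p ∈ S := by
    refine ⟨hmemp, fun y hy => ?_⟩
    have : y = σ_p := le_antisymm hy.2 hy.1
    rw [this]; exact hFp
  have hS_ne : S.Nonempty := ⟨σ_p, hpS⟩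
  have hS_bdd : BddBelow S := ⟨σ_ℓ, fun x hx => hx.1.1⟩
  set m := sInf S with hmdef
  have hm : m ∈ Icc σ_ℓ σ_p :=
    ⟨le_csInf hS_ne fun x hx => hx.1.1, csInf_le hS_bdd hpS⟩
  have hA : ∀ y ∈ Ioc m σ_p, 0 < c y + u y - y := by
    intro y hy
    obtain ⟨x, hxS, hxy⟩ := exists_lt_of_csInf_lt hS_ne hy.1
    exact hxS.2 y ⟨hxy.le, hy.2⟩
  have hFm : 0 < c m + u m - m := by
    rcases eq_or_lt_of_le hm.2 with heq | hlt
    · rw [heq]; exact hFp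
    by_contra hFm0
    push_neg at hFm0
    have hρm : ρ₁ ≤ ρ m := (key m hm hA m ⟨le_rfl, hm.2⟩).1
    have e1 := (hc σ_p hmemp).2
    rw [hρp] at e1
    have hcm2 : c σ_p ^ 2 ≤ c m ^ 2 := by
      rw [(hc m hm).2, e1]
      have h2 : ρ₁ ^ (γ - 1) ≤ ρ m ^ (γ - 1) :=
        Real.rpow_le_rpow hρ₁.le hρm (by linarith)
      have hγs : (0:ℝ) ≤ γ * s₁ := by nlinarith
      exact mul_le_mul_of_nonneg_left h2 hγs
    have hcc : c σ_p ≤ c m := by nlinarith [(hc m hm).1, (hc σ_p hmemp).1]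
    have hgm := hgmono m hm hA ⟨le_rfl, hm.2⟩ ⟨hlt.le, le_rfl⟩ hlt
    simp only at hgm
    rw [hup] at hgm
    linarith
  have hmS : m ∈ S := by
    refine ⟨hm, fun y hy => ?_⟩
    rcases eq_or_lt_of_le hy.1 with heq | hlt
    · rw [← heq]; exact hFm
    · exact hA y ⟨hlt, hy.2⟩
  have hmℓ : m = σ_ℓ := by
    by_contra hne
    have hml : σ_ℓ < m := lt_of_le_of_ne hm.1 (Ne.symm hne)
    have hcw : ContinuousWithinAt (fun x => c x + u x - x) (Icc σ_ℓ σ_p) m := hFcont m hm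
    have h0 : ∀ᶠ z in nhds (c m + u m - m), 0 < z := eventually_gt_nhds hFm
    have hev : ∀ᶠ y in nhdsWithin m (Icc σ_ℓ σ_p), 0 < c y + u y - y :=
      Filter.Tendsto.eventually hcw h0
    obtain ⟨δ, hδ, hball⟩ := Metric.mem_nhdsWithin_iff.mp hev
    set x := max σ_ℓ (m - δ / 2) with hxdef
    have hxm : x < m := max_lt hml (by linarith)
    have hxI : x ∈ Icc σ_ℓ σ_p := ⟨le_max_left _ _, hxm.le.trans hm.2⟩
    have hxS : x ∈ S := by
      refine ⟨hxI, fun y hy => ?_⟩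
      rcases lt_or_ge y m with hlt | hge
      · apply hball
        constructor
        · rw [Metric.mem_ball, Real.dist_eq, abs_of_nonpos (by linarith)]
          have : m - δ / 2 ≤ x := le_max_right _ _
          have : m - δ / 2 ≤ y := this.trans hy.1
          linarith
        · exact ⟨(le_max_left _ _).trans hy.1, hy.2⟩
      · rcases eq_or_lt_of_le hge with heq | hlt2
        · rw [← heq]; exact hFm
        · exact hA y ⟨hlt2, hy.2⟩
    exact absurd (csInf_le hS_bdd hxS) (not_le.mpr hxm)
  have hF : ∀ y ∈ Icc σ_ℓ σ_p, 0 < c y + u y - y := by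
    intro y hy
    exact hmS.2 y ⟨hmℓ ▸ hy.1, hy.2⟩
  have hbnds : ∀ y ∈ Icc σ_ℓ σ_p, ρ₁ ≤ ρ y ∧ u₁ ≤ u y :=
    key σ_ℓ ⟨le_rfl, hσ.le⟩ (fun y hy => hF y ⟨hy.1.le, hy.2⟩)
  have hg := hgmono σ_ℓ ⟨le_rfl, hσ.le⟩ (fun y hy => hF y ⟨hy.1.le, hy.2⟩)
  -- strict positivity on the interior
  have hstrict : ∀ y ∈ Ioo σ_ℓ σ_p, 0 < u y ∧ 0 < y - u y ∧ 0 < ρ y ∧ 0 < c y ∧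
      y * ((u y - y) ^ 2 - c y ^ 2) < 0 := by
    intro y hy
    have hyI : y ∈ Icc σ_ℓ σ_p := ⟨hy.1.le, hy.2.le⟩
    have hFy := hF y hyI
    obtain ⟨hρy, huy⟩ := hbnds y hyI
    have hgy := hg ⟨le_rfl, hσ.le⟩ hyI hy.1
    simp only at hgy
    have h0 : 0 ≤ σ_ℓ - u σ_ℓ := by linarith [(hbounds σ_ℓ ⟨le_rfl, hσ.le⟩).2.1]
    refine ⟨by linarith, by linarith, by linarith, by linarith [(hbounds y hyI).2.1], hDneg y hyI hFy⟩
  have hantiρ : StrictAntiOn ρ (Icc σ_ℓ σ_p) := by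
    apply strictAntiOn_of_deriv_neg (convex_Icc σ_ℓ σ_p) hρcont
    intro y hy
    rw [interior_Icc] at hy
    have hyI : y ∈ Icc σ_ℓ σ_p := ⟨hy.1.le, hy.2.le⟩
    obtain ⟨hu0, hyu, hρ0, hc0, hD⟩ := hstrict y hy
    rw [(hρ' y hyI).deriv]
    apply div_neg_of_pos_of_neg _ hD
    nlinarith [mul_pos (mul_pos hu0 hyu) hρ0]
  have hantiu : StrictAntiOn u (Icc σ_ℓ σ_p) := by
    apply strictAntiOn_of_deriv_neg (convex_Icc σ_ℓ σ_p) hucont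
    intro y hy
    rw [interior_Icc] at hy
    have hyI : y ∈ Icc σ_ℓ σ_p := ⟨hy.1.le, hy.2.le⟩
    obtain ⟨hu0, hyu, hρ0, hc0, hD⟩ := hstrict y hy
    rw [(hu' y hyI).deriv]
    exact div_neg_of_pos_of_neg (by positivity) hD
  exact ⟨hantiρ, hantiu, hbnds⟩
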